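/- Let T be a topological space satisfying the T₀ separation axiom, and let S be a separated point of T (i.e., S and any point not in the closure relation with S can be separated by disjoint open sets; in particular any two distinct separated points have disjoint neighborhoods). Given a sequence (S_i) of pairwise distinct separated points of T, there exist a subsequence (S_{i(j)}) and open neighborhoods V_j of S_{i(j)} such that V_j contains no other point of the subsequence. -/

import Mathlib

/-- Let `T` be a `T₀` topological space and `(S i)` a sequence of pairwise
distinct separated points (in particular any two distinct points of the sequence admit
disjoint open neighborhoods). Then there are a subsequence `S (φ j)` and open neighborhoods
`V j` of `S (φ j)` containing no other point of the subsequence. -/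
theorem stmt13 {T : Type} [TopologicalSpace T] [T0Space T]
    (S : ℕ → T) (hinj : Function.Injective S)
    (hsep : ∀ i j : ℕ, i ≠ j → ∃ U V : Set T,
      IsOpen U ∧ IsOpen V ∧ S i ∈ U ∧ S j ∈ V ∧ Disjoint U V) :
    ∃ φ : ℕ → ℕ, StrictMono φ ∧ ∃ V : ℕ → Set T,
      ∀ j : ℕ, IsOpen (V j) ∧ S (φ j) ∈ V j ∧ ∀ k : ℕ, k ≠ j → S (φ k) ∉ V j := by
  classical
  -- auxiliary: tails of an infinite set are infinite
  have hgt : ∀ (A : Set ℕ), A.Infinite → ∀ n : ℕ, {b ∈ A | n < b}.Infinite := by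
    intro A hA n
    have hsub : A \ Set.Iic n ⊆ {b ∈ A | n < b} := by
      intro b hb
      exact ⟨hb.1, by simpa using hb.2⟩
    exact (hA.diff (Set.finite_Iic n)).mono hsub
  -- Key extraction lemma
  have key : ∀ A : Set ℕ, A.Infinite → ∃ j ∈ A, ∃ V : Set T, IsOpen V ∧ S j ∈ V ∧
      ∃ B, B ⊆ A ∧ B.Infinite ∧ ∀ b ∈ B, j < b ∧ S b ∉ V := by
    intro A hA
    obtain ⟨i, hiA⟩ := hA.nonempty
    by_cases h : ∃ V : Set T, IsOpen V ∧ S i ∈ V ∧ {a ∈ A | i < a ∧ S a ∉ V}.Infinite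
    · obtain ⟨V, hVo, hiV, hinf⟩ := h
      exact ⟨i, hiA, V, hVo, hiV, _, fun b hb => hb.1, hinf, fun b hb => hb.2⟩
    · push_neg at h
      obtain ⟨a, haA, hia⟩ := (hgt A hA i).nonempty
      obtain ⟨U, W, hUo, hWo, hiU, haW, hdisj⟩ := hsep i a (Nat.ne_of_lt hia)
      have hfin : {b ∈ A | i < b ∧ S b ∉ U}.Finite := by
        have := h U hUo hiU
        exact this
      set B : Set ℕ := {b ∈ A | a < b ∧ S b ∈ U} with hB
      have hBinf : B.Infinite := by
        have hsub : {b ∈ A | a < b} \ {b ∈ A | i < b ∧ S b ∉ U} ⊆ B := by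
          intro b hb
          obtain ⟨⟨hbA, hab⟩, hb2⟩ := hb
          refine ⟨hbA, hab, ?_⟩
          by_contra hbU
          exact hb2 ⟨hbA, lt_trans hia hab, hbU⟩
        exact ((hgt A hA a).diff hfin).mono hsub
      refine ⟨a, haA, W, hWo, haW, B, fun b hb => hb.1, hBinf, fun b hb => ⟨hb.2.1, ?_⟩⟩
      intro hbW
      exact (Set.disjoint_left.mp hdisj hb.2.2) hbW
  choose j hjA V hVo hjV B hBA hBinf hB using key
  -- iterate the key lemma
  let Aseq : ℕ → {s : Set ℕ // s.Infinite} := fun n =>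
    Nat.rec ⟨Set.univ, Set.infinite_univ⟩ (fun _ p => ⟨B p.1 p.2, hBinf p.1 p.2⟩) n
  set φ' : ℕ → ℕ := fun n => j (Aseq n).1 (Aseq n).2 with hφ'
  set V' : ℕ → Set T := fun n => V (Aseq n).1 (Aseq n).2 with hV'
  have hmem : ∀ n, φ' n ∈ (Aseq n).1 := fun n => hjA _ _
  have hsucc : ∀ n, (Aseq (n + 1)).1 = B (Aseq n).1 (Aseq n).2 := fun n => rfl
  have hstep : ∀ n, ∀ b ∈ (Aseq (n + 1)).1, φ' n < b ∧ S b ∉ V' n := by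
    intro n b hb
    exact hB (Aseq n).1 (Aseq n).2 b hb
  have hanti : ∀ m n, m ≤ n → (Aseq n).1 ⊆ (Aseq m).1 := by
    intro m n hmn
    induction n with
    | zero => simp [Nat.le_zero.mp hmn]
    | succ k ih =>
      rcases Nat.lt_or_ge m (k + 1) with h | h
      · exact fun x hx => ih (Nat.lt_succ_iff.mp h) (hBA (Aseq k).1 (Aseq k).2 hx)
      · have : m = k + 1 := le_antisymm hmn h
        subst this
        exact fun x hx => hx
  have hlater : ∀ n k, n < k → φ' n < φ' k ∧ S (φ' k) ∉ V' n := by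
    intro n k hnk
    have : φ' k ∈ (Aseq (n + 1)).1 := hanti (n + 1) k hnk (hmem k)
    exact hstep n _ this
  have hmono : StrictMono φ' := strictMono_nat_of_lt_succ fun n =>
    (hlater n (n + 1) (Nat.lt_succ_self n)).1
  -- separating open sets for pairs
  have hsep' := hsep
  choose U W hUo hWo hU hW hdisj using hsep'
  set E : ℕ → ℕ → Set T := fun n l =>
    if h : φ' n = φ' l then Set.univ else U (φ' n) (φ' l) h with hE
  have hEo : ∀ n l, IsOpen (E n l) := by
    intro n l
    simp only [hE]
    split
    · exact isOpen_univ
    · exact hUo _ _ _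
  have hEmem : ∀ n l, S (φ' n) ∈ E n l := by
    intro n l
    simp only [hE]
    split
    · trivial
    · exact hU _ _ _
  have hEavoid : ∀ n l, φ' n ≠ φ' l → S (φ' l) ∉ E n l := by
    intro n l hne
    simp only [hE, dif_neg hne]
    exact fun hmem' => Set.disjoint_left.mp (hdisj _ _ hne) hmem' (hW _ _ hne)
  refine ⟨φ', hmono, fun n => V' n ∩ ⋂ l ∈ Finset.range n, E n l, fun n => ⟨?_, ?_, ?_⟩⟩
  · exact (hVo _ _).inter (isOpen_biInter_finset fun l _ => hEo n l)
  · exact ⟨hjV _ _, Set.mem_biInter fun l _ => hEmem n l⟩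
  · intro k hk hmem'
    obtain ⟨h1, h2⟩ := hmem'
    rcases Nat.lt_or_ge k n with hlt | hge
    · have hne : φ' n ≠ φ' k := fun h => (hmono hlt).ne' h
      exact hEavoid n k hne (by simpa using (Set.mem_iInter₂.mp h2 k (Finset.mem_range.mpr hlt)))
    · have hlt : n < k := lt_of_le_of_ne hge fun h => hk h.symm
      exact (hlater n k hlt).2 h1
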